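/- Let (D, N) be an admissible pair of 2×2 complex matrices with G = D D* + N N* and complementary pair D⊥ = -G^{-1} N, N⊥ = G^{-1} D, and let (D', N') be another admissible pair. Define T = D' (N⊥)* - N' (D⊥)* and S = N' D* - D' N*. Then D' = T D + S D⊥ and N' = T N + S N⊥. -/

import Mathlib

open Matrix

lemma key_identities (D N G : Matrix (Fin 2) (Fin 2) ℂ)
    (hrank : (Matrix.fromCols D N).rank = 2)
    (hsym : D * Nᴴ = N * Dᴴ)
    (hG : G = D * Dᴴ + N * Nᴴ) :
    Dᴴ * G⁻¹ * D + Nᴴ * G⁻¹ * N = 1 ∧ Nᴴ * G⁻¹ * D = Dᴴ * G⁻¹ * N := by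
  -- G = M Mᴴ with M = fromCols D N
  have hGfac : G = Matrix.fromCols D N * (Matrix.fromCols D N)ᴴ := by
    rw [conjTranspose_fromCols_eq_fromRows_conjTranspose, fromCols_mul_fromRows, hG]
  have hGrank : G.rank = 2 := by
    open ComplexOrder in
    rw [hGfac, rank_self_mul_conjTranspose, hrank]
  -- G is invertible
  have hGu : IsUnit G := by
    rw [← Matrix.mulVec_injective_iff_isUnit]
    have hsurj : Function.Surjective G.mulVecLin := by
      rw [← LinearMap.range_eq_top]
      apply Submodule.eq_top_of_finrank_eq
      have : Module.finrank ℂ (Fin 2 → ℂ) = 2 := by simp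
      rw [this]
      exact hGrank
    have hinj : Function.Injective G.mulVecLin :=
      (LinearMap.injective_iff_surjective).mpr hsurj
    exact hinj
  have hGdet : IsUnit G.det := (Matrix.isUnit_iff_isUnit_det G).mp hGu
  have hGi1 : G * G⁻¹ = 1 := Matrix.mul_nonsing_inv G hGdet
  have hGi2 : G⁻¹ * G = 1 := Matrix.nonsing_inv_mul G hGdet
  have hGherm : Gᴴ = G := by
    rw [hG]; simp [conjTranspose_add, conjTranspose_mul]
  have hGih : G⁻¹ᴴ = G⁻¹ := by rw [Matrix.conjTranspose_nonsing_inv, hGherm]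
  set X : Matrix (Fin 2) (Fin 2) ℂ := Dᴴ * G⁻¹ * D + Nᴴ * G⁻¹ * N - 1 with hX
  set Y : Matrix (Fin 2) (Fin 2) ℂ := Nᴴ * G⁻¹ * D - Dᴴ * G⁻¹ * N with hY
  have h1 : D * X + N * Y = 0 := by
    have e : D * X + N * Y
        = G * (G⁻¹ * D) - D + (D * Nᴴ - N * Dᴴ) * (G⁻¹ * N) := by
      rw [hX, hY, hG]; noncomm_ring
    rw [e, hsym, sub_self, Matrix.zero_mul, add_zero, ← Matrix.mul_assoc, hGi1,
      Matrix.one_mul, sub_self]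
  have h2 : N * X - D * Y = 0 := by
    have e : N * X - D * Y
        = G * (G⁻¹ * N) - N + (N * Dᴴ - D * Nᴴ) * (G⁻¹ * D) := by
      rw [hX, hY, hG]; noncomm_ring
    rw [e, ← hsym, sub_self, Matrix.zero_mul, add_zero, ← Matrix.mul_assoc, hGi1,
      Matrix.one_mul, sub_self]
  -- U = D + iN and V = D - iN are invertible since U Uᴴ = V Vᴴ = G
  set U : Matrix (Fin 2) (Fin 2) ℂ := D + Complex.I • N with hU
  set V : Matrix (Fin 2) (Fin 2) ℂ := D - Complex.I • N with hV
  have hUG : U * Uᴴ = G := by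
    rw [hU, hG]
    simp only [conjTranspose_add, conjTranspose_smul, Complex.star_def, Complex.conj_I,
      add_mul, mul_add, smul_mul_assoc, mul_smul_comm, smul_smul, neg_smul, smul_neg,
      mul_neg, neg_mul, neg_neg, Complex.I_mul_I, neg_one_smul]
    simp only [hsym]
    match_scalars <;> simp [Complex.I_sq] <;> ring
  have hVG : V * Vᴴ = G := by
    rw [hV, hG]
    simp only [conjTranspose_sub, conjTranspose_smul, Complex.star_def, Complex.conj_I,
      sub_mul, mul_sub, add_mul, mul_add, smul_mul_assoc, mul_smul_comm, smul_smul,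
      neg_smul, smul_neg, mul_neg, neg_mul, neg_neg, Complex.I_mul_I, neg_one_smul]
    simp only [hsym]
    match_scalars <;> simp [Complex.I_sq] <;> ring
  have hUu : IsUnit U.det := by
    have : IsUnit (U.det * Uᴴ.det) := by rw [← Matrix.det_mul, hUG]; exact hGdet
    exact isUnit_of_mul_isUnit_left this
  have hVu : IsUnit V.det := by
    have : IsUnit (V.det * Vᴴ.det) := by rw [← Matrix.det_mul, hVG]; exact hGdet
    exact isUnit_of_mul_isUnit_left this
  -- U (X - iY) = 0 and V (X + iY) = 0
  have hU0 : U * (X - Complex.I • Y) = 0 := by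
    have e : U * (X - Complex.I • Y)
        = (D * X + N * Y) + Complex.I • (N * X - D * Y) := by
      rw [hU]
      simp only [add_mul, mul_sub, sub_mul, mul_add, smul_mul_assoc, mul_smul_comm,
        smul_sub, smul_add, smul_smul, mul_neg, neg_mul, smul_neg, neg_smul, neg_neg, Complex.I_mul_I, neg_one_smul]
      module
    rw [e, h1, h2, smul_zero, add_zero]
  have hV0 : V * (X + Complex.I • Y) = 0 := by
    have e : V * (X + Complex.I • Y)
        = (D * X + N * Y) - Complex.I • (N * X - D * Y) := by
      rw [hV]
      simp only [add_mul, mul_sub, sub_mul, mul_add, smul_mul_assoc, mul_smul_comm,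
        smul_sub, smul_add, smul_smul, mul_neg, neg_mul, smul_neg, neg_smul, neg_neg, Complex.I_mul_I, neg_one_smul]
      module
    rw [e, h1, h2, smul_zero, sub_zero]
  have hXmY : X - Complex.I • Y = 0 := by
    have := congrArg (fun M => U⁻¹ * M) hU0
    simpa [← Matrix.mul_assoc, Matrix.nonsing_inv_mul U hUu] using this
  have hXpY : X + Complex.I • Y = 0 := by
    have := congrArg (fun M => V⁻¹ * M) hV0
    simpa [← Matrix.mul_assoc, Matrix.nonsing_inv_mul V hVu] using this
  have hX0 : X = 0 := by
    have h2X : (2 : ℂ) • X = 0 := by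
      rw [two_smul]
      calc X + X = (X - Complex.I • Y) + (X + Complex.I • Y) := by abel
        _ = 0 := by rw [hXmY, hXpY, add_zero]
    rcases smul_eq_zero.mp h2X with h | h
    · norm_num at h
    · exact h
  have hY0 : Y = 0 := by
    have hIY : Complex.I • Y = 0 := by
      have := hXpY; rw [hX0, zero_add] at this; exact this
    rcases smul_eq_zero.mp hIY with h | h
    · exact absurd h Complex.I_ne_zero
    · exact h
  constructor
  · have := hX0
    rw [hX, sub_eq_zero] at this
    exact this
  · have := hY0
    rw [hY, sub_eq_zero] at this
    exact this

/-- Matrix form of identities (4.15)–(4.16): any admissible pair `(D',N')` can be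
expressed through `(D,N)` and its complementary pair via
`T = D'(N⊥)ᴴ - N'(D⊥)ᴴ` and `S = N'Dᴴ - D'Nᴴ`. -/
theorem trace_map_decomposition (D N D' N' G Dp Np T S : Matrix (Fin 2) (Fin 2) ℂ)
    (hrank : (Matrix.fromCols D N).rank = 2)
    (hsym : D * Nᴴ = N * Dᴴ)
    (hrank' : (Matrix.fromCols D' N').rank = 2)
    (hsym' : D' * N'ᴴ = N' * D'ᴴ)
    (hG : G = D * Dᴴ + N * Nᴴ)
    (hDp : Dp = -(G⁻¹ * N))
    (hNp : Np = G⁻¹ * D)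
    (hT : T = D' * Npᴴ - N' * Dpᴴ)
    (hS : S = N' * Dᴴ - D' * Nᴴ) :
    D' = T * D + S * Dp ∧ N' = T * N + S * Np := by
  obtain ⟨k1, k2⟩ := key_identities D N G hrank hsym hG
  have hGherm : Gᴴ = G := by
    rw [hG]; simp [conjTranspose_add, conjTranspose_mul]
  have hGih : G⁻¹ᴴ = G⁻¹ := by rw [Matrix.conjTranspose_nonsing_inv, hGherm]
  have hNph : Npᴴ = Dᴴ * G⁻¹ := by rw [hNp, conjTranspose_mul, hGih]
  have hDph : Dpᴴ = -(Nᴴ * G⁻¹) := by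
    rw [hDp, conjTranspose_neg, conjTranspose_mul, hGih]
  constructor
  · have e : T * D + S * Dp
        = D' * (Dᴴ * G⁻¹ * D + Nᴴ * G⁻¹ * N) + N' * (Nᴴ * G⁻¹ * D - Dᴴ * G⁻¹ * N) := by
      rw [hT, hS, hNph, hDph, hDp]; noncomm_ring
    rw [e, k1, k2, sub_self, Matrix.mul_zero, add_zero, Matrix.mul_one]
  · have e : T * N + S * Np
        = N' * (Dᴴ * G⁻¹ * D + Nᴴ * G⁻¹ * N) - D' * (Nᴴ * G⁻¹ * D - Dᴴ * G⁻¹ * N) := by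
      rw [hT, hS, hNph, hDph, hNp]; noncomm_ring
    rw [e, k1, k2, sub_self, Matrix.mul_zero, sub_zero, Matrix.mul_one]
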